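/- Let (X, T) and (Y, S) be Cantor minimal systems and let π : X → Y be a continuous surjection with π(Tx) = S(π(x)) for all x ∈ X, which is almost one-to-one: there exists x₀ ∈ X with π⁻¹({π(x₀)}) = {x₀}. Then the quotient K⁰(X,T)/π*(K⁰(Y,S)) is torsion-free; concretely, for every f ∈ C(X,ℤ) and every integer k ≥ 1, if there exist h ∈ C(Y,ℤ) and g ∈ C(X,ℤ) with k·f = h∘π + g − g∘T⁻¹, then there exist h' ∈ C(Y,ℤ) and g' ∈ C(X,ℤ) with f = h'∘π + g' − g'∘T⁻¹. -/

import Mathlib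

/-- The full (two-sided) orbit of `x` under the homeomorphism `T`. -/
def homeoOrbit {X : Type*} [TopologicalSpace X] (T : X ≃ₜ X) (x : X) : Set X :=
  Set.range fun n : ℤ => (T.toEquiv ^ n) x

/-- A homeomorphism is minimal if every orbit is dense. -/
def IsMinimalHomeo {X : Type*} [TopologicalSpace X] (T : X ≃ₜ X) : Prop :=
  ∀ x : X, Dense (homeoOrbit T x)

/-- Equivariance for integer powers. -/
lemma fac_zpow_aux {X Y : Type*} [TopologicalSpace X] [TopologicalSpace Y]
    (T : X ≃ₜ X) (S : Y ≃ₜ Y) (π : C(X, Y))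
    (hfac : ∀ x : X, π (T x) = S (π x)) :
    ∀ (n : ℤ) (x : X), π ((T.toEquiv ^ n) x) = (S.toEquiv ^ n) (π x) := by
  have hfac' : ∀ x : X, π (T.symm x) = S.symm (π x) := by
    intro x
    have h1 := hfac (T.symm x)
    rw [T.apply_symm_apply] at h1
    rw [h1, S.symm_apply_apply]
  intro n
  induction n using Int.induction_on with
  | zero => simp
  | succ n ih =>
    intro x
    simp only [zpow_add_one, Equiv.Perm.mul_apply]
    have : (T.toEquiv : X → X) x = T x := rfl
    rw [this, ih (T x), hfac x]
    rfl
  | pred n ih =>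
    intro x
    simp only [zpow_sub_one, Equiv.Perm.mul_apply, Equiv.Perm.inv_def]
    have h1 : (T.toEquiv.symm : X → X) x = T.symm x := rfl
    have h2 : (S.toEquiv.symm : Y → Y) (π x) = S.symm (π x) := rfl
    rw [h1, h2, ih (T.symm x), hfac' x]

/-- if `π` is an almost one-to-one factor map between Cantor
minimal systems `(X, T)` and `(Y, S)`, then `K⁰(X,T) / π*(K⁰(Y,S))` is
torsion-free: if `k • f` is, modulo coboundaries, pulled back from `Y`
(for some `k ≥ 1`), then so is `f` itself. -/
theorem quotient_torsionFree_of_almost_one_to_one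
    (X : Type*) [TopologicalSpace X] [CompactSpace X] [TopologicalSpace.MetrizableSpace X]
    [TotallyDisconnectedSpace X] [Nonempty X]
    (hX : ∀ x : X, ¬ IsOpen ({x} : Set X))
    (Y : Type*) [TopologicalSpace Y] [CompactSpace Y] [TopologicalSpace.MetrizableSpace Y]
    [TotallyDisconnectedSpace Y] [Nonempty Y]
    (hY : ∀ y : Y, ¬ IsOpen ({y} : Set Y))
    (T : X ≃ₜ X) (hT : IsMinimalHomeo T)
    (S : Y ≃ₜ Y) (hS : IsMinimalHomeo S)
    (π : C(X, Y)) (hsurj : Function.Surjective π)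
    (hfac : ∀ x : X, π (T x) = S (π x))
    (h1to1 : ∃ x₀ : X, π ⁻¹' {π x₀} = {x₀}) :
    ∀ (f : C(X, ℤ)) (k : ℤ), 1 ≤ k →
      (∃ (h : C(Y, ℤ)) (g : C(X, ℤ)),
        k • f = h.comp π + g - g.comp (T.symm : C(X, X))) →
      ∃ (h' : C(Y, ℤ)) (g' : C(X, ℤ)),
        f = h'.comp π + g' - g'.comp (T.symm : C(X, X)) := by
  intro f k hk ⟨h, g, heq⟩
  have hk0 : k ≠ 0 := by omega
  have hfac' : ∀ x : X, π (T.symm x) = S.symm (π x) := by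
    intro x
    have h1 := hfac (T.symm x)
    rw [T.apply_symm_apply] at h1
    rw [h1, S.symm_apply_apply]
  have hfacz := fac_zpow_aux T S π hfac
  -- pointwise form of the hypothesis
  have heq' : ∀ x : X, k * f x = h (π x) + g x - g (T.symm x) := by
    intro x
    have := ContinuousMap.congr_fun heq x
    simpa using this
  -- split g = k * q + r with 0 ≤ r < k
  have cdiv : Continuous fun m : ℤ => m / k := continuous_of_discreteTopology
  have cmod : Continuous fun m : ℤ => m % k := continuous_of_discreteTopology
  set q : C(X, ℤ) := ⟨fun x => g x / k, cdiv.comp g.continuous⟩ with hq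
  set r : C(X, ℤ) := ⟨fun x => g x % k, cmod.comp g.continuous⟩ with hr
  have hgr : ∀ x : X, g x = k * q x + r x := fun x => (Int.mul_ediv_add_emod (g x) k).symm
  have hr0 : ∀ x : X, 0 ≤ r x := fun x => Int.emod_nonneg _ hk0
  have hrk : ∀ x : X, r x < k := fun x => Int.emod_lt_of_pos _ (by omega)
  -- modified function
  set ft : C(X, ℤ) := f - q + q.comp (T.symm : C(X, X)) with hft
  have heq2 : ∀ x : X, k * ft x = h (π x) + r x - r (T.symm x) := by
    intro x
    have hx : ft x = f x - q x + q (T.symm x) := by simp [hft]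
    have h1 := heq' x
    have h2 := hgr x
    have h3 := hgr (T.symm x)
    have : k * ft x = k * f x - k * q x + k * q (T.symm x) := by rw [hx]; ring
    rw [this]; linarith
  -- key congruence along orbits
  have key : ∀ (n : ℤ) (x x' : X), π x = π x' →
      (r ((T.toEquiv ^ n) x) - r ((T.toEquiv ^ n) x')) ≡ (r x - r x') [ZMOD k] := by
    have stepf : ∀ (a a' : X), π a = π a' →
        (r (T a) - r (T a')) ≡ (r a - r a') [ZMOD k] := by
      intro a a' ha
      have h1 := heq2 (T a)
      have h2 := heq2 (T a')
      rw [T.symm_apply_apply] at h1 h2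
      have hπ : π (T a) = π (T a') := by rw [hfac, hfac, ha]
      have : r (T a) - r (T a') - (r a - r a') = k * (ft (T a) - ft (T a')) := by
        rw [hπ] at h1; linarith
      exact Int.ModEq.symm (Int.modEq_iff_dvd.mpr ⟨ft (T a) - ft (T a'), by linarith⟩)
    have stepb : ∀ (a a' : X), π a = π a' →
        (r (T.symm a) - r (T.symm a')) ≡ (r a - r a') [ZMOD k] := by
      intro a a' ha
      have h1 := heq2 a
      have h2 := heq2 a'
      have : r (T.symm a) - r (T.symm a') - (r a - r a') = -(k * (ft a - ft a')) := by
        rw [ha] at h1; linarith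
      exact Int.ModEq.symm (Int.modEq_iff_dvd.mpr ⟨-(ft a - ft a'), by linarith⟩)
    intro n
    induction n using Int.induction_on with
    | zero => intro x x' _; simp
    | succ n ih =>
      intro x x' hxx'
      simp only [zpow_add_one, Equiv.Perm.mul_apply]
      have hπ : π (T x) = π (T x') := by rw [hfac, hfac, hxx']
      exact ((ih (T x) (T x') hπ).trans (stepf x x' hxx'))
    | pred n ih =>
      intro x x' hxx'
      simp only [zpow_sub_one, Equiv.Perm.mul_apply, Equiv.Perm.inv_def]
      have hπ : π (T.symm x) = π (T.symm x') := by rw [hfac', hfac', hxx']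
      exact ((ih (T.symm x) (T.symm x') hπ).trans (stepb x x' hxx'))
  -- r is constant on fibers of π
  obtain ⟨x₀, hx₀⟩ := h1to1
  have hconst : ∀ x x' : X, π x = π x' → r x = r x' := by
    intro x x' hxx'
    -- clopen neighborhood where r equals r x₀
    set U : Set X := r ⁻¹' {r x₀} with hU
    have hUopen : IsOpen U := r.continuous.isOpen_preimage _ (isOpen_discrete _)
    have hx₀U : x₀ ∈ U := rfl
    have hUclosed : IsClosed U := IsClosed.preimage r.continuous (isClosed_discrete _)
    -- the saturated open set
    have hKcompact : IsCompact (π '' Uᶜ) :=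
      (hUopen.isClosed_compl.isCompact).image π.continuous
    have hKclosed : IsClosed (π '' Uᶜ) := hKcompact.isClosed
    have hπx₀ : π x₀ ∉ π '' Uᶜ := by
      rintro ⟨c, hc, hcπ⟩
      have : c ∈ π ⁻¹' {π x₀} := by simp [hcπ]
      rw [hx₀] at this
      simp only [Set.mem_singleton_iff] at this
      exact hc (this ▸ hx₀U)
    set W : Set X := π ⁻¹' (π '' Uᶜ)ᶜ with hW
    have hWopen : IsOpen W := hKclosed.isOpen_compl.preimage π.continuous
    have hx₀W : x₀ ∈ W := hπx₀
    have hWU : W ⊆ U := by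
      intro z hz
      by_contra hzU
      exact hz (Set.mem_image_of_mem π hzU)
    -- find n with T^n x ∈ W
    obtain ⟨z, hz, hzW⟩ := (hT x).exists_mem_open hWopen ⟨x₀, hx₀W⟩
    obtain ⟨n, rfl⟩ := hz
    have hπn : π ((T.toEquiv ^ n) x') = π ((T.toEquiv ^ n) x) := by
      rw [hfacz, hfacz, hxx']
    have hx'W : (T.toEquiv ^ n) x' ∈ W := by
      simp only [hW, Set.mem_preimage]
      rw [hπn]
      exact hzW
    have h₁ : r ((T.toEquiv ^ n) x) = r x₀ := hWU hzW
    have h₂ : r ((T.toEquiv ^ n) x') = r x₀ := hWU hx'W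
    have hcong := key n x x' hxx'
    rw [h₁, h₂, sub_self] at hcong
    have hdvd : k ∣ (r x - r x') := Int.modEq_zero_iff_dvd.mp hcong.symm
    have habs : |r x - r x'| < k := by
      have := hr0 x; have := hrk x; have := hr0 x'; have := hrk x'
      rw [abs_lt]; omega
    have := Int.eq_zero_of_abs_lt_dvd hdvd habs
    omega
  -- factor r through π
  have hcontbar : Continuous (fun y => r (Function.surjInv hsurj y)) := by
    have hqm : Topology.IsQuotientMap π :=
      (π.continuous.isClosedMap).isQuotientMap π.continuous hsurj
    rw [hqm.continuous_iff]
    have : (fun y => r (Function.surjInv hsurj y)) ∘ π = fun x => r x := by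
      funext x
      exact hconst _ _ (Function.surjInv_eq hsurj (π x))
    rw [this]
    exact r.continuous
  set h₂ : C(Y, ℤ) := ⟨fun y => r (Function.surjInv hsurj y), hcontbar⟩ with hh₂def
  have hh₂ : ∀ x : X, h₂ (π x) = r x := by
    intro x
    exact hconst _ _ (Function.surjInv_eq hsurj (π x))
  -- combine
  set H : C(Y, ℤ) := h + h₂ - h₂.comp (S.symm : C(Y, Y)) with hHdef
  have hH : ∀ x : X, H (π x) = k * ft x := by
    intro x
    have h1 : H (π x) = h (π x) + h₂ (π x) - h₂ (S.symm (π x)) := by simp [hHdef]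
    rw [h1, hh₂ x, ← hfac' x, hh₂ (T.symm x), heq2 x]
  have hdvd : ∀ y : Y, k ∣ H y := by
    intro y
    obtain ⟨x, rfl⟩ := hsurj y
    exact ⟨ft x, hH x⟩
  refine ⟨⟨fun y => H y / k, cdiv.comp H.continuous⟩, q, ?_⟩
  ext x
  have h1 : H (π x) / k = ft x := by
    rw [hH x]
    exact Int.mul_ediv_cancel_left _ hk0
  have h2 : ft x = f x - q x + q (T.symm x) := by simp [hft]
  simp only [ContinuousMap.add_apply, ContinuousMap.sub_apply, ContinuousMap.comp_apply,
    ContinuousMap.coe_mk]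
  have h3 : ((T.symm : C(X, X)) : X → X) x = T.symm x := rfl
  rw [h1, h2]
  ring
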